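/- Let F be a field and P ∈ F[x_1,…,x_n] with deg(P) < |F|. If v ∈ rad(P) (the radical of the polynomial function defined by P on F^n), then l(v) = 0 for every l ∈ L_P. -/
import Mathlib


open scoped Classical

noncomputable section

/-- The radical of a function `f : V → F`, as a linear subspace of `V`. -/
def funRadical {F V : Type*} [Field F] [AddCommGroup V] [Module F V]
    (f : V → F) : Submodule F V where
  carrier := {w | ∀ (v : V) (lam : F), f (v + lam • w) = f v}
  zero_mem' := by intro v lam; simp
  add_mem' := by
    intro a b ha hb v lam
    have h1 : v + lam • (a + b) = (v + lam • a) + lam • b := by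
      rw [smul_add]; abel
    rw [h1, hb (v + lam • a) lam, ha v lam]
  smul_mem' := by
    intro c a ha v lam
    have h1 : v + lam • (c • a) = v + (lam * c) • a := by rw [smul_smul]
    rw [h1, ha v (lam * c)]

/-- The directional derivative of a multivariate polynomial `P` along `v` at `a`:
the coefficient of `t` in the univariate polynomial `P (a + t • v)`. -/
def dirDeriv {F : Type*} [Field F] {n : ℕ}
    (P : MvPolynomial (Fin n) F) (a v : Fin n → F) : F :=
  ((MvPolynomial.aeval
    (fun i => Polynomial.C (a i) + Polynomial.C (v i) * Polynomial.X)) P).coeff 1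

/-- The space `L_P`: the span of the functionals `v ↦ ∂P/∂v(a)` over all `a ∈ F^n`. -/
def polyLP {F : Type*} [Field F] {n : ℕ} (P : MvPolynomial (Fin n) F) :
    Submodule F ((Fin n → F) → F) :=
  Submodule.span F (Set.range fun a : Fin n → F => fun v => dirDeriv P a v)

theorem stmt_3 {F : Type*} [Field F] {n : ℕ}
    (P : MvPolynomial (Fin n) F)
    (hdeg : (P.totalDegree : Cardinal) < Cardinal.mk F)
    (v : Fin n → F)
    (hv : v ∈ funRadical (fun x : Fin n → F => MvPolynomial.eval x P)) :
    ∀ l ∈ polyLP P, l v = 0 := by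
  have hgen : ∀ a : Fin n → F, dirDeriv P a v = 0 := by
    intro a
    set f : Fin n → Polynomial F :=
      fun i => Polynomial.C (a i) + Polynomial.C (v i) * Polynomial.X with hf
    set q : Polynomial F := (MvPolynomial.aeval f) P with hq
    -- degree bound
    have hdegq : q.natDegree ≤ P.totalDegree := by
      rw [hq, MvPolynomial.aeval_def, MvPolynomial.eval₂_eq]
      refine le_trans (Polynomial.natDegree_sum_le _ _) ?_
      rw [Finset.fold_max_le]
      refine ⟨Nat.zero_le _, ?_⟩
      intro d hd
      refine le_trans (Polynomial.natDegree_mul_le) ?_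
      rw [Polynomial.algebraMap_eq, Polynomial.natDegree_C, zero_add]
      refine le_trans (Polynomial.natDegree_prod_le _ _) ?_
      refine le_trans (Finset.sum_le_sum (fun i _ => ?_))
        (le_trans (le_of_eq rfl) (MvPolynomial.le_totalDegree hd))
      refine le_trans (Polynomial.natDegree_pow_le) ?_
      have : (f i).natDegree ≤ 1 := by
        refine le_trans (Polynomial.natDegree_add_le _ _) ?_
        simp only [Polynomial.natDegree_C, max_le_iff]
        exact ⟨Nat.zero_le _, le_trans Polynomial.natDegree_mul_le (by simp)⟩
      calc d i * (f i).natDegree ≤ d i * 1 := Nat.mul_le_mul_left _ this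
        _ = d i := Nat.mul_one _
    -- all evaluations are constant
    have heval : ∀ lam : F, q.eval lam = MvPolynomial.eval a P := by
      intro lam
      have h1 : q.eval lam = MvPolynomial.eval (fun i => a i + v i * lam) P := by
        rw [hq, MvPolynomial.aeval_def]
        have hcomp : (Polynomial.evalRingHom lam).comp (Polynomial.C : F →+* Polynomial F)
            = RingHom.id F := by ext x; simp
        have hfun : (Polynomial.evalRingHom lam) ∘ f = fun i => a i + v i * lam := by
          funext i; simp [hf]
        have h0 := MvPolynomial.eval₂_comp_left (Polynomial.evalRingHom lam)
          (Polynomial.C : F →+* Polynomial F) f P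
        rw [hcomp, hfun] at h0
        exact h0
      have h2 : (fun i => a i + v i * lam) = a + lam • v := by
        funext i; simp [mul_comm]
      rw [h1, h2]
      exact hv a lam
    have hzero : q - Polynomial.C (MvPolynomial.eval a P) = 0 := by
      apply Polynomial.eq_zero_of_forall_eval_zero_of_natDegree_lt_card
      · intro r; simp [heval r]
      · refine lt_of_le_of_lt ?_ hdeg
        have h3 : (q - Polynomial.C (MvPolynomial.eval a P)).natDegree ≤ P.totalDegree := by
          refine le_trans (Polynomial.natDegree_sub_le _ _) ?_
          simp [hdegq]
        exact_mod_cast Nat.cast_le.mpr h3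
    have hqC : q = Polynomial.C (MvPolynomial.eval a P) := by
      have := sub_eq_zero.mp hzero; exact this
    show q.coeff 1 = 0
    rw [hqC, Polynomial.coeff_C]; simp
  intro l hl
  have hle : polyLP P ≤ LinearMap.ker (LinearMap.proj v :
      ((Fin n → F) → F) →ₗ[F] F) := by
    rw [polyLP, Submodule.span_le]
    rintro _ ⟨a, rfl⟩
    simpa using hgen a
  exact hle hl

end
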